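/- Let ξ be an extremal real number and let (y_i)_{i≥1} be a sequence of approximation triples for ξ. Then there exists a constant c₃ > 0 such that every nonzero primitive point y ∈ ℤ³ with L_ξ(y) ≤ c₃‖y‖^{-1/γ} is of the form y = y_i or y = −y_i for some index i ≥ 1. -/

import Mathlib

open Polynomial Matrix

/-- The golden ratio γ = (1+√5)/2. -/
noncomputable def golden : ℝ := (1 + Real.sqrt 5) / 2

/-- Norm of a point of ℤ³: max of absolute values of coordinates. -/
def nrm (x : ℤ × ℤ × ℤ) : ℝ := max |(x.1 : ℝ)| (max |(x.2.1 : ℝ)| |(x.2.2 : ℝ)|)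

/-- L_ξ(x) = max(|x₁ − ξx₀|, |x₂ − ξ²x₀|). -/
noncomputable def Lxi (ξ : ℝ) (x : ℤ × ℤ × ℤ) : ℝ :=
  max |(x.2.1 : ℝ) - ξ * (x.1 : ℝ)| |(x.2.2 : ℝ) - ξ ^ 2 * (x.1 : ℝ)|

/-- det(x) = x₀x₂ − x₁². -/
def det2 (x : ℤ × ℤ × ℤ) : ℤ := x.1 * x.2.2 - x.2.1 ^ 2

/-- Determinant of the 3×3 matrix with rows x, y, z. -/
def det3 (x y z : ℤ × ℤ × ℤ) : ℤ :=
  x.1 * (y.2.1 * z.2.2 - y.2.2 * z.2.1)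
    - x.2.1 * (y.1 * z.2.2 - y.2.2 * z.1)
    + x.2.2 * (y.1 * z.2.1 - y.2.1 * z.1)

/-- A point of ℤ³ is primitive if its coordinates are relatively prime. -/
def Primitive (x : ℤ × ℤ × ℤ) : Prop := Int.gcd x.1 (Int.gcd x.2.1 x.2.2 : ℤ) = 1

/-- ξ is neither rational nor quadratic over ℚ: it is a root of no nonzero
rational polynomial of degree at most 2. -/
def NotQuadratic (ξ : ℝ) : Prop :=
  ∀ p : Polynomial ℚ, p ≠ 0 → p.natDegree ≤ 2 → Polynomial.aeval ξ p ≠ 0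

/-- ξ is an extremal real number. -/
def Extremal (ξ : ℝ) : Prop :=
  NotQuadratic ξ ∧ ∃ c : ℝ, 0 < c ∧ ∀ X : ℝ, 1 ≤ X → ∃ x : ℤ × ℤ × ℤ, x ≠ 0 ∧
    |(x.1 : ℝ)| ≤ X ∧ |(x.1 : ℝ) * ξ - (x.2.1 : ℝ)| ≤ c * X ^ (-1 / golden) ∧
    |(x.1 : ℝ) * ξ ^ 2 - (x.2.2 : ℝ)| ≤ c * X ^ (-1 / golden)

/-- (y_i)_{i≥1} is a sequence of approximation triples for ξ (the value y 0 is irrelevant). -/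
def ApproxTriples (ξ : ℝ) (y : ℕ → ℤ × ℤ × ℤ) : Prop :=
  (∀ i, 1 ≤ i → y i ≠ 0 ∧ Primitive (y i)) ∧
  (∀ B : ℝ, ∃ i, 1 ≤ i ∧ B < nrm (y i)) ∧
  ∃ c : ℝ, 1 ≤ c ∧ ∀ i, 1 ≤ i →
    c⁻¹ * nrm (y i) ^ golden ≤ nrm (y (i + 1)) ∧
    nrm (y (i + 1)) ≤ c * nrm (y i) ^ golden ∧
    c⁻¹ * (nrm (y i))⁻¹ ≤ Lxi ξ (y i) ∧
    Lxi ξ (y i) ≤ c * (nrm (y i))⁻¹ ∧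
    1 ≤ |det2 (y i)| ∧ (|det2 (y i)| : ℝ) ≤ c ∧
    1 ≤ |det3 (y i) (y (i + 1)) (y (i + 2))| ∧
    (|det3 (y i) (y (i + 1)) (y (i + 2))| : ℝ) ≤ c

lemma sqrt5_sq : Real.sqrt 5 ^ 2 = 5 := Real.sq_sqrt (by norm_num)

lemma one_lt_golden : 1 < golden := by
  have h : (1:ℝ) < Real.sqrt 5 := by
    nlinarith [sqrt5_sq, Real.sqrt_nonneg 5]
  unfold golden; linarith

lemma golden_lt_two : golden < 2 := by
  have h : Real.sqrt 5 < 3 := by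
    nlinarith [sqrt5_sq, Real.sqrt_nonneg 5]
  unfold golden; linarith

lemma golden_pos : 0 < golden := lt_trans one_pos one_lt_golden

lemma golden_sq : golden ^ 2 = golden + 1 := by
  unfold golden; have := sqrt5_sq; nlinarith [sqrt5_sq]

lemma golden_mul_sub : golden * (golden - 1) = 1 := by nlinarith [golden_sq]

lemma neg_one_div_golden : -1 / golden = 1 - golden := by
  rw [div_eq_iff (ne_of_gt golden_pos)]
  nlinarith [golden_sq]

lemma nrm_nonneg (x : ℤ × ℤ × ℤ) : 0 ≤ nrm x := le_trans (abs_nonneg _) (le_max_left _ _)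

lemma one_le_nrm {x : ℤ × ℤ × ℤ} (hx : x ≠ 0) : 1 ≤ nrm x := by
  rcases x with ⟨a, b, c⟩
  have h : a ≠ 0 ∨ b ≠ 0 ∨ c ≠ 0 := by
    by_contra h; push_neg at h
    exact hx (by simp [h.1, h.2.1, h.2.2, Prod.ext_iff])
  have key : ∀ n : ℤ, n ≠ 0 → (1:ℝ) ≤ |(n:ℝ)| := by
    intro n hn
    have : (1:ℤ) ≤ |n| := Int.one_le_abs hn
    calc (1:ℝ) ≤ ((|n| : ℤ) : ℝ) := by exact_mod_cast this
      _ = |(n:ℝ)| := by push_cast; ring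
  rcases h with h | h | h
  · exact le_trans (key a h) (le_max_left _ _)
  · exact le_trans (key b h) (le_trans (le_max_left _ _) (le_max_right _ _))
  · exact le_trans (key c h) (le_trans (le_max_right _ _) (le_max_right _ _))

lemma Lxi_nonneg (ξ : ℝ) (x : ℤ × ℤ × ℤ) : 0 ≤ Lxi ξ x :=
  le_trans (abs_nonneg _) (le_max_left _ _)

lemma abs_fst_le (x : ℤ × ℤ × ℤ) : |(x.1 : ℝ)| ≤ nrm x := le_max_left _ _
lemma abs_l1_le (ξ : ℝ) (x : ℤ × ℤ × ℤ) : |(x.2.1 : ℝ) - ξ * (x.1:ℝ)| ≤ Lxi ξ x := le_max_left _ _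
lemma abs_l2_le (ξ : ℝ) (x : ℤ × ℤ × ℤ) : |(x.2.2 : ℝ) - ξ^2 * (x.1:ℝ)| ≤ Lxi ξ x := le_max_right _ _

lemma det3_bound (ξ : ℝ) (x u v : ℤ × ℤ × ℤ) :
    |(det3 x u v : ℝ)| ≤ 2 * (nrm x * Lxi ξ u * Lxi ξ v + nrm u * Lxi ξ x * Lxi ξ v
      + nrm v * Lxi ξ x * Lxi ξ u) := by
  set X1 := (x.2.1 : ℝ) - ξ * (x.1:ℝ) with hX1
  set X2 := (x.2.2 : ℝ) - ξ^2 * (x.1:ℝ) with hX2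
  set U1 := (u.2.1 : ℝ) - ξ * (u.1:ℝ) with hU1
  set U2 := (u.2.2 : ℝ) - ξ^2 * (u.1:ℝ) with hU2
  set V1 := (v.2.1 : ℝ) - ξ * (v.1:ℝ) with hV1
  set V2 := (v.2.2 : ℝ) - ξ^2 * (v.1:ℝ) with hV2
  have hid : (det3 x u v : ℝ) = (x.1:ℝ) * (U1 * V2 - U2 * V1)
      - (u.1:ℝ) * (X1 * V2 - X2 * V1) + (v.1:ℝ) * (X1 * U2 - X2 * U1) := by
    simp only [det3, hX1, hX2, hU1, hU2, hV1, hV2]; push_cast; ring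
  have hb : ∀ (N L L' a b c d e : ℝ), |a| ≤ N → |b| ≤ L → |c| ≤ L' → |d| ≤ L → |e| ≤ L' →
      |a * (b * c - d * e)| ≤ 2 * (N * L * L') := by
    intro N L L' a b c d e ha hbb hc hd he
    have hL : 0 ≤ L := le_trans (abs_nonneg _) hbb
    have hL' : 0 ≤ L' := le_trans (abs_nonneg _) hc
    have h1 : |b * c - d * e| ≤ |b| * |c| + |d| * |e| := by
      calc |b * c - d * e| ≤ |b * c| + |d * e| := abs_sub _ _
        _ = |b| * |c| + |d| * |e| := by rw [abs_mul, abs_mul]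
    calc |a * (b * c - d * e)| = |a| * |b * c - d * e| := abs_mul _ _
      _ ≤ N * (L * L' + L * L') := by
          apply mul_le_mul ha _ (abs_nonneg _) (le_trans (abs_nonneg _) ha)
          exact le_trans h1 (by gcongr)
      _ = 2 * (N * L * L') := by ring
  rw [hid]
  have t1 : |(x.1:ℝ) * (U1 * V2 - U2 * V1)| ≤ 2 * (nrm x * Lxi ξ u * Lxi ξ v) :=
    hb _ _ _ _ _ _ _ _ (abs_fst_le x) (abs_l1_le ξ u) (abs_l2_le ξ v) (abs_l2_le ξ u) (abs_l1_le ξ v)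
  have t2 : |(u.1:ℝ) * (X1 * V2 - X2 * V1)| ≤ 2 * (nrm u * Lxi ξ x * Lxi ξ v) :=
    hb _ _ _ _ _ _ _ _ (abs_fst_le u) (abs_l1_le ξ x) (abs_l2_le ξ v) (abs_l2_le ξ x) (abs_l1_le ξ v)
  have t3 : |(v.1:ℝ) * (X1 * U2 - X2 * U1)| ≤ 2 * (nrm v * Lxi ξ x * Lxi ξ u) :=
    hb _ _ _ _ _ _ _ _ (abs_fst_le v) (abs_l1_le ξ x) (abs_l2_le ξ u) (abs_l2_le ξ x) (abs_l1_le ξ u)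
  calc |(x.1:ℝ) * (U1 * V2 - U2 * V1) - (u.1:ℝ) * (X1 * V2 - X2 * V1) + (v.1:ℝ) * (X1 * U2 - X2 * U1)|
      ≤ |(x.1:ℝ) * (U1 * V2 - U2 * V1) - (u.1:ℝ) * (X1 * V2 - X2 * V1)| + |(v.1:ℝ) * (X1 * U2 - X2 * U1)| := abs_add_le _ _
    _ ≤ |(x.1:ℝ) * (U1 * V2 - U2 * V1)| + |(u.1:ℝ) * (X1 * V2 - X2 * V1)| + |(v.1:ℝ) * (X1 * U2 - X2 * U1)| := by
        gcongr; exact abs_sub _ _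
    _ ≤ 2 * (nrm x * Lxi ξ u * Lxi ξ v) + 2 * (nrm u * Lxi ξ x * Lxi ξ v) + 2 * (nrm v * Lxi ξ x * Lxi ξ u) := by
        gcongr
    _ = 2 * (nrm x * Lxi ξ u * Lxi ξ v + nrm u * Lxi ξ x * Lxi ξ v + nrm v * Lxi ξ x * Lxi ξ u) := by ring

lemma cross_eq_zero (a b c z : ℤ × ℤ × ℤ) (h1 : det3 z a b = 0) (h2 : det3 z b c = 0)
    (h3 : det3 a b c ≠ 0) :
    z.1 * b.2.1 = z.2.1 * b.1 ∧ z.1 * b.2.2 = z.2.2 * b.1 ∧ z.2.1 * b.2.2 = z.2.2 * b.2.1 := by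
  obtain ⟨a1, a2, a3⟩ := a; obtain ⟨b1, b2, b3⟩ := b; obtain ⟨c1, c2, c3⟩ := c
  obtain ⟨z1, z2, z3⟩ := z
  simp only [det3] at h1 h2 h3 ⊢
  refine ⟨?_, ?_, ?_⟩
  · have key : (a1 * (b2 * c3 - b3 * c2) - a2 * (b1 * c3 - b3 * c1) + a3 * (b1 * c2 - b2 * c1))
        * (z1 * b2 - z2 * b1) = 0 := by
      linear_combination (-(b1 * c2 - b2 * c1)) * h1 + (a1 * b2 - a2 * b1) * h2
    rcases mul_eq_zero.mp key with h | h
    · exact absurd h h3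
    · linarith
  · have key : (a1 * (b2 * c3 - b3 * c2) - a2 * (b1 * c3 - b3 * c1) + a3 * (b1 * c2 - b2 * c1))
        * (z1 * b3 - z3 * b1) = 0 := by
      linear_combination (-(b1 * c3 - b3 * c1)) * h1 + (a1 * b3 - a3 * b1) * h2
    rcases mul_eq_zero.mp key with h | h
    · exact absurd h h3
    · linarith
  · have key : (a1 * (b2 * c3 - b3 * c2) - a2 * (b1 * c3 - b3 * c1) + a3 * (b1 * c2 - b2 * c1))
        * (z2 * b3 - z3 * b2) = 0 := by
      linear_combination (-(b2 * c3 - b3 * c2)) * h1 + (a2 * b3 - a3 * b2) * h2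
    rcases mul_eq_zero.mp key with h | h
    · exact absurd h h3
    · linarith

lemma prop_helper (p q r s t u : ℤ) (hp : p ≠ 0)
    (hgz : Int.gcd p (Int.gcd q r : ℤ) = 1) (hgb : Int.gcd s (Int.gcd t u : ℤ) = 1)
    (m1 : p * t = q * s) (m2 : p * u = r * s) :
    (s = p ∧ t = q ∧ u = r) ∨ (s = -p ∧ t = -q ∧ u = -r) := by
  have hcop : IsCoprime p ((Int.gcd q r : ℤ)) := Int.isCoprime_iff_gcd_eq_one.mpr hgz
  have hd1 : p ∣ s * q := ⟨t, by linarith⟩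
  have hd2 : p ∣ s * r := ⟨u, by linarith⟩
  have hdg : p ∣ s * (Int.gcd q r : ℤ) := by
    have h1 : p ∣ (Int.gcd (s * q) (s * r) : ℤ) := Int.dvd_coe_gcd hd1 hd2
    rw [Int.gcd_mul_left] at h1
    push_cast at h1
    rcases abs_cases s with ⟨hs, _⟩ | ⟨hs, _⟩
    · rwa [hs] at h1
    · rw [hs] at h1
      exact (dvd_neg.mp (by rwa [neg_mul] at h1))
  have hps : p ∣ s := (hcop.dvd_of_dvd_mul_right) hdg
  obtain ⟨e, hs⟩ := hps
  have ht : t = q * e := by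
    have : p * t = p * (q * e) := by rw [m1, hs]; ring
    exact mul_left_cancel₀ hp this
  have hu : u = r * e := by
    have : p * u = p * (r * e) := by rw [m2, hs]; ring
    exact mul_left_cancel₀ hp this
  have he : e ∣ (1 : ℤ) := by
    have h1 : e ∣ s := ⟨p, by rw [hs]; ring⟩
    have h2 : e ∣ t := ⟨q, by rw [ht]; ring⟩
    have h3 : e ∣ u := ⟨r, by rw [hu]; ring⟩
    have := Int.dvd_coe_gcd h1 (Int.dvd_coe_gcd h2 h3)
    rwa [hgb] at this
  rcases Int.isUnit_iff.mp (isUnit_of_dvd_one he) with he1 | he1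
  · left; refine ⟨?_, ?_, ?_⟩ <;> simp [hs, ht, hu, he1]
  · right; refine ⟨?_, ?_, ?_⟩ <;> simp [hs, ht, hu, he1]

lemma gcd3_eq (a b c : ℤ) :
    Int.gcd a (Int.gcd b c : ℤ) = Nat.gcd a.natAbs (Nat.gcd b.natAbs c.natAbs) := by
  unfold Int.gcd
  simp

lemma nat_rot (a b c : ℕ) : Nat.gcd c (Nat.gcd a b) = Nat.gcd a (Nat.gcd b c) := by
  rw [Nat.gcd_comm c, Nat.gcd_assoc]

lemma nat_swap (a b c : ℕ) : Nat.gcd b (Nat.gcd a c) = Nat.gcd a (Nat.gcd b c) := by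
  rw [← Nat.gcd_assoc, Nat.gcd_comm b a, Nat.gcd_assoc]

lemma eq_or_eq_neg (z b : ℤ × ℤ × ℤ) (hz : z ≠ 0) (hzp : Primitive z) (hbp : Primitive b)
    (m1 : z.1 * b.2.1 = z.2.1 * b.1) (m2 : z.1 * b.2.2 = z.2.2 * b.1)
    (m3 : z.2.1 * b.2.2 = z.2.2 * b.2.1) : z = b ∨ z = -b := by
  obtain ⟨z1, z2, z3⟩ := z; obtain ⟨b1, b2, b3⟩ := b
  simp only [Primitive, gcd3_eq] at hzp hbp
  simp only at m1 m2 m3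
  have hz' : z1 ≠ 0 ∨ z2 ≠ 0 ∨ z3 ≠ 0 := by
    by_contra h; push_neg at h
    exact hz (by simp [h.1, h.2.1, h.2.2, Prod.ext_iff])
  have key : (b1 = z1 ∧ b2 = z2 ∧ b3 = z3) ∨ (b1 = -z1 ∧ b2 = -z2 ∧ b3 = -z3) := by
    rcases hz' with h | h | h
    · have := prop_helper z1 z2 z3 b1 b2 b3 h
        (by rw [gcd3_eq]; exact hzp) (by rw [gcd3_eq]; exact hbp) m1 m2
      tauto
    · have hzp' : Int.gcd z2 (Int.gcd z1 z3 : ℤ) = 1 := by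
        rw [gcd3_eq, nat_swap z1.natAbs z2.natAbs z3.natAbs]; exact hzp
      have hbp' : Int.gcd b2 (Int.gcd b1 b3 : ℤ) = 1 := by
        rw [gcd3_eq, nat_swap b1.natAbs b2.natAbs b3.natAbs]; exact hbp
      have := prop_helper z2 z1 z3 b2 b1 b3 h hzp' hbp' (by linarith) (by linarith)
      tauto
    · have hzp' : Int.gcd z3 (Int.gcd z1 z2 : ℤ) = 1 := by
        rw [gcd3_eq, Nat.gcd_comm, Nat.gcd_assoc]
        exact hzp
      have hbp' : Int.gcd b3 (Int.gcd b1 b2 : ℤ) = 1 := by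
        rw [gcd3_eq, Nat.gcd_comm, Nat.gcd_assoc]
        exact hbp
      have := prop_helper z3 z1 z2 b3 b1 b2 h hzp' hbp' (by linarith) (by linarith)
      tauto
  rcases key with ⟨h1, h2, h3⟩ | ⟨h1, h2, h3⟩
  · left; simp [Prod.ext_iff, h1, h2, h3]
  · right; simp [Prod.ext_iff, h1, h2, h3]

lemma Lxi_pos {ξ : ℝ} (hξ : NotQuadratic ξ) (z : ℤ × ℤ × ℤ) (hz : z ≠ 0) : 0 < Lxi ξ z := by
  rcases lt_or_eq_of_le (Lxi_nonneg ξ z) with h | h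
  · exact h
  exfalso
  have h1 : |(z.2.1 : ℝ) - ξ * (z.1 : ℝ)| = 0 ∧ |(z.2.2 : ℝ) - ξ ^ 2 * (z.1 : ℝ)| = 0 := by
    constructor
    · exact le_antisymm (h ▸ abs_l1_le ξ z) (abs_nonneg _)
    · exact le_antisymm (h ▸ abs_l2_le ξ z) (abs_nonneg _)
  have e1 : (z.2.1 : ℝ) = ξ * (z.1 : ℝ) := by have := abs_eq_zero.mp h1.1; linarith
  have e2 : (z.2.2 : ℝ) = ξ ^ 2 * (z.1 : ℝ) := by have := abs_eq_zero.mp h1.2; linarith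
  by_cases h0 : z.1 = 0
  · apply hz
    have : (z.2.1 : ℝ) = 0 := by rw [e1, h0]; simp
    have hz21 : z.2.1 = 0 := by exact_mod_cast this
    have : (z.2.2 : ℝ) = 0 := by rw [e2, h0]; simp
    have hz22 : z.2.2 = 0 := by exact_mod_cast this
    obtain ⟨a, b, c⟩ := z
    simp_all [Prod.ext_iff]
  · set p : Polynomial ℚ := Polynomial.C ((z.1 : ℚ)) * Polynomial.X - Polynomial.C ((z.2.1 : ℚ))
      with hp
    have hpne : p ≠ 0 := by
      intro hcon
      have hco : p.coeff 1 = (z.1 : ℚ) := by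
        rw [hp]
        rw [Polynomial.coeff_sub, Polynomial.coeff_C_mul, Polynomial.coeff_X_one,
          Polynomial.coeff_C]
        simp
      rw [hcon] at hco
      simp at hco
      exact h0 (by exact_mod_cast hco.symm)
    have hdeg : p.natDegree ≤ 2 := by
      refine le_trans (Polynomial.natDegree_sub_le _ _) (max_le ?_ ?_)
      · refine le_trans (Polynomial.natDegree_C_mul_le _ _) ?_
        simp
      · simp
    have : Polynomial.aeval ξ p = 0 := by
      simp [hp, e1]
      ring
    exact hξ p hpne hdeg this

lemma small_min (ξ : ℝ) (hξ : NotQuadratic ξ) (Z₀ : ℝ) (hZ : 1 ≤ Z₀) :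
    ∃ m : ℝ, 0 < m ∧ ∀ z : ℤ × ℤ × ℤ, z ≠ 0 → nrm z ≤ Z₀ → m ≤ Lxi ξ z := by
  classical
  set S : Set (ℤ × ℤ × ℤ) := {z | z ≠ 0 ∧ nrm z ≤ Z₀} with hS
  have hfin : S.Finite := by
    set N : ℤ := ⌈Z₀⌉ with hN
    apply Set.Finite.subset (Set.finite_Icc ((-N, -N, -N) : ℤ × ℤ × ℤ) (N, N, N))
    intro z hz
    obtain ⟨hz0, hzn⟩ := hz
    have key : ∀ n : ℤ, |(n : ℝ)| ≤ Z₀ → -N ≤ n ∧ n ≤ N := by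
      intro n hn
      have h1 : (n : ℝ) ≤ (N : ℝ) := le_trans (le_abs_self _) (le_trans hn (Int.le_ceil _))
      have h2 : ((-N : ℤ) : ℝ) ≤ (n : ℝ) := by
        push_cast
        have := neg_abs_le (n:ℝ)
        have h3 : -(N:ℝ) ≤ -|(n:ℝ)| := by
          simp only [neg_le_neg_iff]
          exact le_trans hn (Int.le_ceil _)
        linarith
      exact ⟨by exact_mod_cast h2, by exact_mod_cast h1⟩
    have k1 := key z.1 (le_trans (abs_fst_le z) hzn)
    have k2 := key z.2.1 (le_trans (le_trans (le_trans (le_max_left _ _) (le_max_right _ _)) le_rfl) hzn)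
    have k3 := key z.2.2 (le_trans (le_trans (le_max_right _ _) (le_max_right _ _)) hzn)
    constructor <;> simp [Prod.le_def] <;> tauto
  have hne : S.Nonempty := ⟨(1, 0, 0), by
    constructor
    · simp [Prod.ext_iff]
    · simp [nrm]; exact hZ⟩
  obtain ⟨w, hw, hmin⟩ := Set.exists_min_image S (Lxi ξ) hfin hne
  exact ⟨Lxi ξ w, Lxi_pos hξ w hw.1, fun z h1 h2 => hmin z ⟨h1, h2⟩⟩

lemma K_ge_one {c : ℝ} (hc : 1 ≤ c) : (1:ℝ) ≤ 13 * c^4 := by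
  have h : (1:ℝ)^4 ≤ c^4 := pow_le_pow_left₀ zero_le_one hc 4
  simp at h; nlinarith

lemma arith_bound (c c₃ K X Yu Yv Lz Lu Lv : ℝ)
    (hc : 1 ≤ c) (hc₃ : 0 < c₃) (hKeq : K = 13 * c^4)
    (hc₃K : c₃ ≤ 1 / (13 * c^2 * K))
    (hX : 1 ≤ X) (hYu : 1 ≤ Yu) (hYv : 1 ≤ Yv) (huv : Yu ≤ Yv)
    (hLz0 : 0 ≤ Lz) (hLu0 : 0 ≤ Lu) (hLv0 : 0 ≤ Lv)
    (hLu : Lu ≤ c * Yu⁻¹) (hLv : Lv ≤ c * Yv⁻¹)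
    (hrecuv : Yv ≤ c * Yu ^ golden)
    (hKX : K * X ≤ c^2 * (Yu * Yv))
    (huK : Yu ≤ K * X)
    (hLz : Lz ≤ c₃ * X ^ (1 - golden)) :
    2 * (X * Lu * Lv + Yu * Lz * Lv + Yv * Lz * Lu) < 1 := by
  have hγ := one_lt_golden
  have hc0 : (0:ℝ) < c := lt_of_lt_of_le one_pos hc
  have hK1 : (1:ℝ) ≤ K := hKeq ▸ K_ge_one hc
  have hK0 : (0:ℝ) < K := lt_of_lt_of_le one_pos hK1
  have hX0 : (0:ℝ) < X := lt_of_lt_of_le one_pos hX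
  have hYu0 : (0:ℝ) < Yu := lt_of_lt_of_le one_pos hYu
  have hYv0 : (0:ℝ) < Yv := lt_of_lt_of_le one_pos hYv
  have hXexp : X ^ (1 - golden) ≤ 1 :=
    Real.rpow_le_one_of_one_le_of_nonpos hX (by linarith)
  have hXexp0 : (0:ℝ) < X ^ (1 - golden) := Real.rpow_pos_of_pos hX0 _
  -- T1
  have hT1 : X * Lu * Lv ≤ 1 / 13 := by
    have h1 : X * Lu * Lv ≤ X * (c * Yu⁻¹) * (c * Yv⁻¹) := by gcongr
    have h2 : X * (c * Yu⁻¹) * (c * Yv⁻¹) ≤ (c^2 * (Yu * Yv) / K) * (c * Yu⁻¹) * (c * Yv⁻¹) := by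
      have hXle : X ≤ c^2 * (Yu * Yv) / K := by
        rw [le_div_iff₀ hK0]; nlinarith [hKX]
      gcongr
    have h3 : (c^2 * (Yu * Yv) / K) * (c * Yu⁻¹) * (c * Yv⁻¹) = c^4 / K := by
      field_simp
    have h4 : c^4 / K = 1 / 13 := by rw [hKeq]; field_simp
    linarith
  -- T2
  have hT2 : Yu * Lz * Lv ≤ 1 / 13 := by
    have h1 : Yu * Lz * Lv ≤ Yv * (c₃ * X ^ (1 - golden)) * (c * Yv⁻¹) :=
      mul_le_mul (mul_le_mul huv hLz hLz0 hYv0.le) hLv hLv0 (by positivity)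
    have h2 : Yv * (c₃ * X ^ (1 - golden)) * (c * Yv⁻¹) = c * c₃ * X ^ (1 - golden) := by
      field_simp
    have h3 : c * c₃ * X ^ (1 - golden) ≤ c * c₃ :=  by
      nlinarith [mul_pos hc0 hc₃]
    have h4 : c * c₃ ≤ 1 / 13 := by
      have hcK : c ≤ c^2 * K := by nlinarith
      calc c * c₃ ≤ (c^2 * K) * c₃ := mul_le_mul_of_nonneg_right hcK hc₃.le
        _ ≤ (c^2 * K) * (1 / (13 * c^2 * K)) := mul_le_mul_of_nonneg_left hc₃K (by positivity)
        _ = 1 / 13 := by field_simp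
    linarith
  -- T3
  have hT3 : Yv * Lz * Lu ≤ 1 / 13 := by
    have h1 : Yu ^ (golden - 1) ≤ (K * X) ^ (golden - 1) :=
      Real.rpow_le_rpow (le_of_lt hYu0) huK (by linarith)
    have h2 : (K * X) ^ (golden - 1) = K ^ (golden - 1) * X ^ (golden - 1) :=
      Real.mul_rpow (le_of_lt hK0) (le_of_lt hX0)
    have h3 : X ^ (golden - 1) * X ^ (1 - golden) = 1 := by
      have he : (golden - 1) + (1 - golden) = 0 := by ring
      rw [← Real.rpow_add hX0, he, Real.rpow_zero]
    have h4 : K ^ (golden - 1) ≤ K := by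
      have h := Real.rpow_le_rpow_of_exponent_le hK1
        (show golden - 1 ≤ 1 by linarith [golden_lt_two])
      rwa [Real.rpow_one] at h
    have key : Yu ^ (golden - 1) * X ^ (1 - golden) ≤ K := by
      calc Yu ^ (golden - 1) * X ^ (1 - golden)
          ≤ (K * X) ^ (golden - 1) * X ^ (1 - golden) :=
            mul_le_mul_of_nonneg_right h1 hXexp0.le
        _ = K ^ (golden - 1) * (X ^ (golden - 1) * X ^ (1 - golden)) := by rw [h2]; ring
        _ = K ^ (golden - 1) := by rw [h3, mul_one]
        _ ≤ K := h4
    have hgu : Yu ^ (golden - 1) * Yu = Yu ^ golden := by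
      have h := Real.rpow_add hYu0 (golden - 1) 1
      rw [Real.rpow_one] at h
      rw [← h]
      norm_num
    have hYvle : Yv ≤ c * Yu ^ (golden - 1) * Yu := by
      calc Yv ≤ c * Yu ^ golden := hrecuv
        _ = c * Yu ^ (golden - 1) * Yu := by rw [← hgu]; ring
    have hp1 : (0:ℝ) < Yu ^ (golden - 1) := Real.rpow_pos_of_pos hYu0 _
    have h5 : Yv * Lz * Lu
        ≤ (c * Yu ^ (golden - 1) * Yu) * (c₃ * X ^ (1 - golden)) * (c * Yu⁻¹) :=
      mul_le_mul (mul_le_mul hYvle hLz hLz0 (by positivity)) hLu hLu0 (by positivity)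
    have h6 : (c * Yu ^ (golden - 1) * Yu) * (c₃ * X ^ (1 - golden)) * (c * Yu⁻¹)
        = c^2 * c₃ * (Yu ^ (golden - 1) * X ^ (1 - golden)) := by
      field_simp
    have h7 : c^2 * c₃ * (Yu ^ (golden - 1) * X ^ (1 - golden)) ≤ c^2 * c₃ * K :=
      mul_le_mul_of_nonneg_left key (by positivity)
    have h8 : c^2 * c₃ * K ≤ 1 / 13 := by
      have h5' : c₃ * (13 * c^2 * K) ≤ 1 := by
        rw [← le_div_iff₀ (by positivity)]
        exact hc₃K
      linarith [h5']
    linarith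
  linarith

lemma small_det (ξ : ℝ) (z u v : ℤ × ℤ × ℤ) (c c₃ : ℝ)
    (hc : 1 ≤ c) (hc₃ : 0 < c₃) (hc₃K : c₃ ≤ 1 / (13 * c^2 * (13 * c^4)))
    (hX : 1 ≤ nrm z)
    (hYu : 1 ≤ nrm u) (hYv : 1 ≤ nrm v) (huv : nrm u ≤ nrm v)
    (hLu : Lxi ξ u ≤ c * (nrm u)⁻¹) (hLv : Lxi ξ v ≤ c * (nrm v)⁻¹)
    (hrecuv : nrm v ≤ c * nrm u ^ golden)
    (hKX : (13 * c^4) * nrm z ≤ c^2 * (nrm u * nrm v))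
    (huK : nrm u ≤ (13 * c^4) * nrm z)
    (hLz : Lxi ξ z ≤ c₃ * nrm z ^ (1 - golden)) :
    det3 z u v = 0 := by
  have harith := arith_bound c c₃ (13 * c^4) (nrm z) (nrm u) (nrm v)
    (Lxi ξ z) (Lxi ξ u) (Lxi ξ v) hc hc₃ rfl hc₃K hX hYu hYv huv
    (Lxi_nonneg ξ z) (Lxi_nonneg ξ u) (Lxi_nonneg ξ v) hLu hLv hrecuv hKX huK hLz
  have hbound := det3_bound ξ z u v
  have h : |(det3 z u v : ℝ)| < 1 := lt_of_le_of_lt hbound harith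
  have habs : |det3 z u v| < 1 := by exact_mod_cast h
  have := abs_nonneg (det3 z u v)
  rcases abs_cases (det3 z u v) with ⟨h1,_⟩|⟨h1,_⟩ <;> omega

lemma rpow_peel {Y : ℝ} (hY : 0 < Y) : Y ^ (golden - 1) * Y = Y ^ golden := by
  have h := Real.rpow_add hY (golden - 1) 1
  rw [Real.rpow_one] at h
  rw [← h]
  norm_num

lemma doubling {c Y Y' : ℝ} (hc : 1 ≤ c) (hM : max 1 ((2*c) ^ golden) ≤ Y)
    (h : c⁻¹ * Y ^ golden ≤ Y') : 2 * Y ≤ Y' := by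
  have hc0 : (0:ℝ) < c := lt_of_lt_of_le one_pos hc
  have h2c : (0:ℝ) < 2 * c := by linarith
  have hY1 : 1 ≤ Y := le_trans (le_max_left _ _) hM
  have hY0 : (0:ℝ) < Y := lt_of_lt_of_le one_pos hY1
  have e1 : 2 * c ≤ Y ^ (golden - 1) := by
    have h1 : ((2*c) ^ golden) ^ (golden - 1) ≤ Y ^ (golden - 1) :=
      Real.rpow_le_rpow (by positivity) (le_trans (le_max_right _ _) hM)
        (by linarith [one_lt_golden])
    rwa [← Real.rpow_mul h2c.le, golden_mul_sub, Real.rpow_one] at h1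
  have e2 : 2 * c * Y ≤ Y ^ golden := by
    rw [← rpow_peel hY0]
    exact mul_le_mul_of_nonneg_right e1 hY0.le
  have e3 : 2 * Y = c⁻¹ * (2 * c * Y) := by field_simp
  calc 2 * Y = c⁻¹ * (2 * c * Y) := e3
    _ ≤ c⁻¹ * Y ^ golden := mul_le_mul_of_nonneg_left e2 (by positivity)
    _ ≤ Y' := h

lemma chain1 {c Ya Ya1 Ya2 : ℝ} (hc : 1 ≤ c) (hYa : 1 ≤ Ya) (hYa1 : 1 ≤ Ya1)
    (h1 : Ya1 ≤ c * Ya ^ golden) (h2 : Ya2 ≤ c * Ya1 ^ golden) :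
    Ya2 ≤ c^2 * (Ya * Ya1) := by
  have hc0 : (0:ℝ) < c := lt_of_lt_of_le one_pos hc
  have hYa0 : (0:ℝ) < Ya := lt_of_lt_of_le one_pos hYa
  have hYa10 : (0:ℝ) < Ya1 := lt_of_lt_of_le one_pos hYa1
  have hge : (0:ℝ) ≤ golden - 1 := by linarith [one_lt_golden]
  have e1 : Ya1 ^ (golden - 1) ≤ (c * Ya ^ golden) ^ (golden - 1) :=
    Real.rpow_le_rpow hYa10.le h1 hge
  have e2 : (c * Ya ^ golden) ^ (golden - 1)
      = c ^ (golden - 1) * (Ya ^ golden) ^ (golden - 1) :=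
    Real.mul_rpow hc0.le (by positivity)
  have e3 : (Ya ^ golden) ^ (golden - 1) = Ya := by
    rw [← Real.rpow_mul hYa0.le, golden_mul_sub, Real.rpow_one]
  have e4 : c ^ (golden - 1) ≤ c := by
    have h := Real.rpow_le_rpow_of_exponent_le hc
      (show golden - 1 ≤ 1 by linarith [golden_lt_two])
    rwa [Real.rpow_one] at h
  have e5 : Ya1 ^ (golden - 1) ≤ c * Ya := by
    calc Ya1 ^ (golden - 1) ≤ c ^ (golden - 1) * Ya := by rw [← e3, ← e2]; exact e1
      _ ≤ c * Ya := mul_le_mul_of_nonneg_right e4 hYa0.le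
  calc Ya2 ≤ c * Ya1 ^ golden := h2
    _ = c * (Ya1 ^ (golden - 1) * Ya1) := by rw [rpow_peel hYa10]
    _ ≤ c * ((c * Ya) * Ya1) := by
        apply mul_le_mul_of_nonneg_left _ hc0.le
        exact mul_le_mul_of_nonneg_right e5 hYa10.le
    _ = c^2 * (Ya * Ya1) := by ring

theorem stmt6_aux (ξ : ℝ) (y : ℕ → ℤ × ℤ × ℤ)
    (hNQ : NotQuadratic ξ) (hy : ApproxTriples ξ y) :
    ∃ c₃ : ℝ, 0 < c₃ ∧ ∀ z : ℤ × ℤ × ℤ, z ≠ 0 → Primitive z →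
      Lxi ξ z ≤ c₃ * nrm z ^ (-1 / golden) →
      ∃ i, 1 ≤ i ∧ (z = y i ∨ z = -y i) := by
  obtain ⟨hprim, hunb, c, hc1, hrec⟩ := hy
  have hc0 : (0:ℝ) < c := lt_of_lt_of_le one_pos hc1
  have hK1 : (1:ℝ) ≤ 13 * c^4 := K_ge_one hc1
  have hY1 : ∀ i, 1 ≤ i → 1 ≤ nrm (y i) := fun i hi => one_le_nrm (hprim i hi).1
  set M : ℝ := max 1 ((2*c) ^ golden) with hM
  have hM1 : (1:ℝ) ≤ M := le_max_left _ _
  obtain ⟨i₀, hi₀1, hMi₀⟩ := hunb M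
  -- growth
  have hgrow : ∀ k : ℕ, M * 2^k ≤ nrm (y (i₀ + k)) := by
    intro k
    induction k with
    | zero => simpa using hMi₀.le
    | succ k ih =>
        have hMk : M ≤ nrm (y (i₀ + k)) := by
          have : M ≤ M * 2^k := by nlinarith [one_le_pow₀ (one_le_two (α := ℝ)) (n := k), pow_pos (show (0:ℝ) < 2 by norm_num) k]
          linarith
        have hd : 2 * nrm (y (i₀ + k)) ≤ nrm (y (i₀ + k + 1)) :=
          doubling hc1 hMk (hrec (i₀ + k) (by omega)).1
        have : i₀ + (k+1) = i₀ + k + 1 := by omega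
        rw [this]
        calc M * 2^(k+1) = 2 * (M * 2^k) := by ring
          _ ≤ 2 * nrm (y (i₀ + k)) := by linarith
          _ ≤ nrm (y (i₀ + k + 1)) := hd
  have hMk : ∀ k : ℕ, M ≤ nrm (y (i₀ + k)) := by
    intro k
    have h2k : (1:ℝ) ≤ 2^k := one_le_pow₀ one_le_two
    have := hgrow k
    nlinarith
  have hdbl : ∀ k : ℕ, 2 * nrm (y (i₀ + k)) ≤ nrm (y (i₀ + k + 1)) := fun k =>
    doubling hc1 (hMk k) (hrec (i₀ + k) (by omega)).1
  have hmono : ∀ k : ℕ, nrm (y (i₀ + k)) ≤ nrm (y (i₀ + k + 1)) := by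
    intro k
    have h1 := hY1 (i₀ + k) (by omega)
    have := hdbl k
    linarith
  set Z₀ : ℝ := max (nrm (y (i₀ + 1))) 1 with hZ₀
  obtain ⟨m, hm0, hmmin⟩ := small_min ξ hNQ Z₀ (le_max_right _ _)
  obtain ⟨c₃, hc₃0, hc₃K, hc₃m⟩ : ∃ c₃ : ℝ, 0 < c₃ ∧ c₃ ≤ 1 / (13 * c^2 * (13 * c^4)) ∧
      c₃ ≤ m / 2 :=
    ⟨min (1 / (13 * c^2 * (13 * c^4))) (m/2), lt_min (by positivity) (by positivity),
      min_le_left _ _, min_le_right _ _⟩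
  refine ⟨c₃, hc₃0, ?_⟩
  intro z hz hzprim hLz
  have hX1 : 1 ≤ nrm z := one_le_nrm hz
  have hX0 : (0:ℝ) < nrm z := lt_of_lt_of_le one_pos hX1
  have hLz' : Lxi ξ z ≤ c₃ * nrm z ^ (1 - golden) := by
    rwa [neg_one_div_golden] at hLz
  have hXexp : nrm z ^ (1 - golden) ≤ 1 :=
    Real.rpow_le_one_of_one_le_of_nonpos hX1 (by linarith [one_lt_golden])
  by_cases hcase : nrm z ≤ Z₀
  · exfalso
    have h1 := hmmin z hz hcase
    have h2 : Lxi ξ z ≤ c₃ := le_trans hLz'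
      (mul_le_of_le_one_right hc₃0.le hXexp)
    linarith
  · push_neg at hcase
    have hZ₀X : Z₀ < nrm z := hcase
    have hex : ∃ k : ℕ, (13 * c^4) * nrm z < nrm (y (i₀ + 1 + k)) := by
      obtain ⟨k, hk⟩ := pow_unbounded_of_one_lt (R := ℝ) ((13 * c^4) * nrm z) one_lt_two
      refine ⟨k, ?_⟩
      have h1 := hgrow (1 + k)
      have h2 : (2:ℝ)^k ≤ M * 2^(1+k) := by
        have h3 : (0:ℝ) < 2^k := pow_pos (by norm_num) k
        calc (2:ℝ)^k ≤ 2^(1+k) := by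
              apply pow_le_pow_right₀ one_le_two
              omega
          _ ≤ M * 2^(1+k) := by nlinarith [pow_pos (show (0:ℝ) < 2 by norm_num) (1+k)]
      have h4 : i₀ + (1 + k) = i₀ + 1 + k := by omega
      rw [h4] at h1
      linarith
    have hk₀ne : Nat.find hex ≠ 0 := by
      intro h0
      have h1 := Nat.find_spec hex
      rw [h0] at h1
      simp only [Nat.add_zero] at h1
      have h2 : nrm (y (i₀ + 1)) ≤ Z₀ := le_max_left _ _
      have h3 : nrm z ≤ (13 * c^4) * nrm z := by
        calc nrm z = 1 * nrm z := (one_mul _).symm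
          _ ≤ (13 * c^4) * nrm z := mul_le_mul_of_nonneg_right hK1 hX0.le
      linarith
    obtain ⟨k₁, hk₁⟩ : ∃ k₁, Nat.find hex = k₁ + 1 := ⟨Nat.find hex - 1, by omega⟩
    set a := i₀ + k₁ with hadef
    have ha1 : 1 ≤ a := by omega
    have hYa1K : nrm (y (a + 1)) ≤ (13 * c^4) * nrm z := by
      have h1 := Nat.find_min hex (show k₁ < Nat.find hex by omega)
      rw [show i₀ + 1 + k₁ = a + 1 from by omega] at h1
      exact not_lt.mp h1
    have hYa2K : (13 * c^4) * nrm z < nrm (y (a + 2)) := by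
      have h1 := Nat.find_spec hex
      rwa [hk₁, show i₀ + 1 + (k₁ + 1) = a + 2 from by omega] at h1
    have ra := hrec a (by omega)
    have ra1 := hrec (a+1) (by omega)
    have ra2 := hrec (a+2) (by omega)
    have hYa := hY1 a (by omega)
    have hYa1 := hY1 (a+1) (by omega)
    have hYa2 := hY1 (a+2) (by omega)
    have hmono_a : nrm (y a) ≤ nrm (y (a+1)) := hmono k₁
    have hmono_a1 : nrm (y (a+1)) ≤ nrm (y (a+2)) := hmono (k₁+1)
    have hch := chain1 hc1 hYa hYa1 ra.2.1 ra1.2.1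
    have hKXB : (13 * c^4) * nrm z ≤ c^2 * (nrm (y a) * nrm (y (a+1))) :=
      le_trans hYa2K.le hch
    have huKB : nrm (y a) ≤ (13 * c^4) * nrm z := le_trans hmono_a hYa1K
    have hB := small_det ξ z (y a) (y (a+1)) c c₃ hc1 hc₃0 hc₃K hX1 hYa hYa1 hmono_a
      ra.2.2.2.1 ra1.2.2.2.1 ra.2.1 hKXB huKB hLz'
    have hKXA : (13 * c^4) * nrm z ≤ c^2 * (nrm (y (a+1)) * nrm (y (a+2))) := by
      have hcsq : (1:ℝ) ≤ c^2 := one_le_pow₀ hc1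
      have hc2 : (1:ℝ) ≤ c^2 * nrm (y (a+1)) := by
        calc (1:ℝ) = 1 * 1 := by ring
          _ ≤ c^2 * nrm (y (a+1)) := mul_le_mul hcsq hYa1 zero_le_one (by positivity)
      have h5 : nrm (y (a+2)) * 1 ≤ nrm (y (a+2)) * (c^2 * nrm (y (a+1))) :=
        mul_le_mul_of_nonneg_left hc2 (nrm_nonneg _)
      calc (13 * c^4) * nrm z ≤ nrm (y (a+2)) := hYa2K.le
        _ = nrm (y (a+2)) * 1 := (mul_one _).symm
        _ ≤ nrm (y (a+2)) * (c^2 * nrm (y (a+1))) := h5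
        _ = c^2 * (nrm (y (a+1)) * nrm (y (a+2))) := by ring
    have hA := small_det ξ z (y (a+1)) (y (a+2)) c c₃ hc1 hc₃0 hc₃K hX1 hYa1 hYa2 hmono_a1
      ra1.2.2.2.1 ra2.2.2.2.1 ra1.2.1 hKXA hYa1K hLz'
    have hdetne : det3 (y a) (y (a+1)) (y (a+2)) ≠ 0 := by
      have h1 := ra.2.2.2.2.2.2.1
      intro h
      rw [h] at h1
      simp at h1
    have hcross := cross_eq_zero (y a) (y (a+1)) (y (a+2)) z hB hA hdetne
    have hfin := eq_or_eq_neg z (y (a+1)) hz hzprim (hprim (a+1) (by omega)).2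
      hcross.1 hcross.2.1 hcross.2.2
    exact ⟨a+1, by omega, hfin⟩


/-- Essential uniqueness of the sequence of approximation triples. -/
theorem stmt6 (ξ : ℝ) (y : ℕ → ℤ × ℤ × ℤ)
    (hξ : Extremal ξ) (hy : ApproxTriples ξ y) :
    ∃ c₃ : ℝ, 0 < c₃ ∧ ∀ z : ℤ × ℤ × ℤ, z ≠ 0 → Primitive z →
      Lxi ξ z ≤ c₃ * nrm z ^ (-1 / golden) →
      ∃ i, 1 ≤ i ∧ (z = y i ∨ z = -y i) := by
  obtain ⟨hNQ, -⟩ := hξ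
  exact stmt6_aux ξ y hNQ hy
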